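/- Suppose there exist $\beta \in \mathcal{P}(\pi)$ and a function $\epsilon : [0,\infty) \to [0,\infty)$ with $\sup_{\mu \in \mathcal{P}(\pi)} \|\mu T_t - \beta\|_{TV} \le \epsilon(t)$ for all $t$. Then, setting $\phi := d\beta/d\pi$, for every $\mu \in \mathcal{P}_\infty(\pi)$ and $t \ge 0$, $\big\| \lambda^{-t}\frac{d(\mu P_t)}{d\pi} - \mu(\phi) \big\|_{L^\infty(\pi)} \le \epsilon(t)\cdot \frac{\mathrm{osc}_\pi(\mu)}{2}$, where $\mathrm{osc}_\pi(\mu) = \mathrm{ess\,sup}_\pi(d\mu/d\pi) - \mathrm{ess\,inf}_\pi(d\mu/d\pi)$. -/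

import Mathlib

open MeasureTheory ProbabilityTheory
open scoped ENNReal NNReal

/-- total variation convergence of `μ T_t = T_t^† μ = (λ^{-t} P_t(dμ/dπ))π`
to `β = φ π` at rate `ε(t)` (expressed via `L¹(π)` distances of densities) implies, for
any initial condition `μ = g π ∈ 𝒫_∞(π)` with `m ≤ g ≤ M` a.e.,
`‖λ^{-t} d(μP_t)/dπ - μ(φ)‖_{L^∞(π)} ≤ ε(t) · (M - m)/2`. -/
theorem stmt_9 {χ : Type*} [MeasurableSpace χ]
    (P : ℝ → Kernel χ χ) [∀ t, IsSFiniteKernel (P t)]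
    (hPsub : ∀ t x, P t x Set.univ ≤ 1)
    (π : Measure χ) [IsProbabilityMeasure π]
    (l : ℝ) (hl0 : 0 < l) (hl1 : l ≤ 1)
    (hQSD : ∀ t : ℝ, 0 ≤ t → π.bind (fun x => P t x) = ENNReal.ofReal (l ^ t) • π)
    (β : Measure χ) [IsProbabilityMeasure β] (hβac : β ≪ π)
    (φ : χ → ℝ) (hφ : φ =ᵐ[π] fun x => (β.rnDeriv π x).toReal)
    (ε : ℝ → ℝ) (hε : ∀ t, 0 ≤ ε t)
    (hTV : ∀ t : ℝ, 0 ≤ t → ∀ g : χ → ℝ, Measurable g → Integrable g π →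
      (∀ᵐ x ∂π, 0 ≤ g x) → ∫ x, g x ∂π = 1 →
      ∫ x, |(l ^ t)⁻¹ * (∫ y, g y ∂(P t x)) - φ x| ∂π ≤ ε t) :
    ∀ t : ℝ, 0 ≤ t → ∀ g : χ → ℝ, Measurable g → (∀ᵐ x ∂π, 0 ≤ g x) →
      ∫ x, g x ∂π = 1 → ∀ m M : ℝ, (∀ᵐ x ∂π, m ≤ g x ∧ g x ≤ M) →
      ∀ᵐ y ∂π,
        |(l ^ t)⁻¹ * (((π.withDensity fun x => ENNReal.ofReal (g x)).bind
            (fun x => P t x)).rnDeriv π y).toReal - ∫ x, φ x * g x ∂π|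
          ≤ ε t * ((M - m) / 2) := by
  intro t ht g hgm hg0 hg1 m M hmM
  set c : ℝ := (M - m) / 2 with hc
  set a : ℝ := (m + M) / 2 with ha
  obtain ⟨x0, hx01, hx02⟩ := hmM.exists
  have hc0 : 0 ≤ c := by rw [hc]; linarith
  have hga : ∀ᵐ x ∂π, |g x - a| ≤ c := by
    filter_upwards [hmM] with x hx
    rw [abs_le]; constructor <;> [rw [ha, hc]; rw [ha, hc]] <;> [linarith [hx.1]; linarith [hx.2]]
  set Cb : ℝ := max |m| |M| with hCb
  have hgB : ∀ᵐ x ∂π, ‖g x‖ ≤ Cb := by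
    filter_upwards [hmM] with x hx
    rw [Real.norm_eq_abs, abs_le]
    constructor
    · calc -(Cb) ≤ -|m| := by simp [hCb]
        _ ≤ m := neg_abs_le m
        _ ≤ g x := hx.1
    · exact hx.2.trans ((le_abs_self M).trans (le_max_right _ _))
  have hgint : Integrable g π :=
    Integrable.mono' (integrable_const Cb) hgm.aestronglyMeasurable hgB
  have hlt : 0 < l ^ t := Real.rpow_pos_of_pos hl0 t
  have hPmeas : Measurable fun x => P t x := (P t).measurable
  set μ := π.withDensity fun x => ENNReal.ofReal (g x) with hμdef
  set ν := μ.bind (fun x => P t x) with hνdef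
  have hogm : Measurable fun x => ENNReal.ofReal (g x) := hgm.ennreal_ofReal
  have hνA : ∀ A : Set χ, MeasurableSet A →
      ν A = ∫⁻ x, ENNReal.ofReal (g x) * P t x A ∂π := by
    intro A hA
    rw [hνdef, Measure.bind_apply hA hPmeas.aemeasurable, hμdef,
      lintegral_withDensity_eq_lintegral_mul π hogm ((P t).measurable_coe hA)]
    rfl
  have hπbind : ∀ A : Set χ, MeasurableSet A →
      ∫⁻ x, P t x A ∂π = ENNReal.ofReal (l ^ t) * π A := by
    intro A hA
    have := congrArg (fun ρ : Measure χ => ρ A) (hQSD t ht)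
    simpa [Measure.bind_apply hA hPmeas.aemeasurable] using this
  -- φ facts
  have hφaesm : AEStronglyMeasurable φ π :=
    ((Measure.measurable_rnDeriv β π).ennreal_toReal.aestronglyMeasurable).congr hφ.symm
  have hφint : Integrable φ π :=
    (Measure.integrable_toReal_rnDeriv (μ := β) (ν := π)).congr hφ.symm
  have hφ1 : ∫ x, φ x ∂π = 1 := by
    rw [integral_congr_ae hφ, Measure.integral_toReal_rnDeriv hβac]
    simp
  have hgφint : Integrable (fun x => g x * φ x) π := by
    refine Integrable.mono' (hφint.abs.const_mul Cb)
      (hgm.aestronglyMeasurable.mul hφaesm) ?_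
    filter_upwards [hgB] with x hx
    rw [Real.norm_eq_abs, abs_mul]
    exact mul_le_mul_of_nonneg_right (by rwa [Real.norm_eq_abs] at hx) (abs_nonneg _)
  -- ν is a finite measure, absolutely continuous wrt π
  have hνfin : IsFiniteMeasure ν := by
    constructor
    rw [hνA Set.univ MeasurableSet.univ]
    calc ∫⁻ x, ENNReal.ofReal (g x) * P t x Set.univ ∂π
        ≤ ∫⁻ x, ENNReal.ofReal (g x) * 1 ∂π := by
          exact lintegral_mono fun x => mul_le_mul_right (hPsub t x) _
      _ = ENNReal.ofReal (∫ x, g x ∂π) := by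
          simp only [mul_one]
          rw [← ofReal_integral_eq_lintegral_ofReal hgint hg0]
      _ < ⊤ := by simp
  haveI := hνfin
  have hνac : ν ≪ π := by
    refine Measure.AbsolutelyContinuous.mk fun A hA hA0 => ?_
    have h1 : ∫⁻ x, P t x A ∂π = 0 := by rw [hπbind A hA, hA0, mul_zero]
    have h2 : ∀ᵐ x ∂π, P t x A = 0 :=
      (lintegral_eq_zero_iff ((P t).measurable_coe hA)).mp h1
    rw [hνA A hA]
    rw [lintegral_eq_zero_iff (f := fun x => ENNReal.ofReal (g x) * P t x A)
      (hogm.mul ((P t).measurable_coe hA))]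
    filter_upwards [h2] with x hx
    simp [hx]
  -- the key set-wise bound
  have key : ∀ A : Set χ, MeasurableSet A →
      |(l ^ t)⁻¹ * (ν A).toReal - (∫ x, φ x * g x ∂π) * (π A).toReal|
        ≤ ε t * c * (π A).toReal := by
    intro A hA
    by_cases hA0 : π A = 0
    · have : ν A = 0 := hνac hA0
      simp [this, hA0]
    -- p > 0
    set p : ℝ := (π A).toReal with hp
    have hp0 : 0 < p := ENNReal.toReal_pos hA0 (measure_ne_top π A)
    set k : χ → ℝ := fun x => (P t x A).toReal with hk
    have hkm : Measurable k := ((P t).measurable_coe hA).ennreal_toReal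
    have hkA : ∀ x, P t x A ≠ ⊤ :=
      fun x => ((measure_mono (Set.subset_univ A)).trans_lt
        (lt_of_le_of_lt (hPsub t x) ENNReal.one_lt_top)).ne
    have hk0 : ∀ x, 0 ≤ k x := fun x => ENNReal.toReal_nonneg
    have hk1 : ∀ x, k x ≤ 1 := by
      intro x
      have : P t x A ≤ 1 := (measure_mono (Set.subset_univ A)).trans (hPsub t x)
      simpa using ENNReal.toReal_mono ENNReal.one_ne_top this
    have hkint : Integrable k π := by
      refine Integrable.mono' (integrable_const 1) hkm.aestronglyMeasurable ?_
      exact ae_of_all _ fun x => by rw [Real.norm_eq_abs, abs_of_nonneg (hk0 x)]; exact hk1 x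
    have hgkint : Integrable (fun x => g x * k x) π := by
      refine Integrable.mono' hgint.abs (hgm.aestronglyMeasurable.mul hkm.aestronglyMeasurable) ?_
      refine ae_of_all _ fun x => ?_
      rw [Real.norm_eq_abs, abs_mul, abs_of_nonneg (hk0 x)]
      calc |g x| * k x ≤ |g x| * 1 := mul_le_mul_of_nonneg_left (hk1 x) (abs_nonneg _)
        _ = |g x| := mul_one _
    -- ν A in real terms
    have hνAr : (ν A).toReal = ∫ x, g x * k x ∂π := by
      have e1 : ν A = ENNReal.ofReal (∫ x, g x * k x ∂π) := by
        rw [hνA A hA, ofReal_integral_eq_lintegral_ofReal hgkint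
          (by filter_upwards [hg0] with x hx; exact mul_nonneg hx (hk0 x))]
        refine lintegral_congr_ae ?_
        filter_upwards [hg0] with x hx
        rw [ENNReal.ofReal_mul hx, ENNReal.ofReal_toReal (hkA x)]
      rw [e1, ENNReal.toReal_ofReal]
      exact integral_nonneg_of_ae (by filter_upwards [hg0] with x hx; exact mul_nonneg hx (hk0 x))
    -- ∫ k = l^t * p
    have hkI : ∫ x, k x ∂π = l ^ t * p := by
      have e1 : ENNReal.ofReal (∫ x, k x ∂π) = ENNReal.ofReal (l ^ t) * π A := by
        rw [ofReal_integral_eq_lintegral_ofReal hkint (ae_of_all _ hk0)]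
        rw [← hπbind A hA]
        refine lintegral_congr fun x => ?_
        rw [hk, ENNReal.ofReal_toReal (hkA x)]
      have := congrArg ENNReal.toReal e1
      rwa [ENNReal.toReal_ofReal (integral_nonneg hk0), ENNReal.toReal_mul,
        ENNReal.toReal_ofReal hlt.le] at this
    -- apply hTV to the normalized indicator of A
    set gA : χ → ℝ := fun x => p⁻¹ * A.indicator (1 : χ → ℝ) x with hgA
    have hindint : Integrable (A.indicator (1 : χ → ℝ)) π :=
      (integrable_const (1 : ℝ)).indicator hA
    have hTVA : ∫ x, |(l ^ t)⁻¹ * (p⁻¹ * k x) - φ x| ∂π ≤ ε t := by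
      have h := hTV t ht gA ((measurable_one.indicator hA).const_mul p⁻¹)
        (hindint.const_mul p⁻¹)
        (ae_of_all _ fun x => mul_nonneg (inv_nonneg.mpr hp0.le)
          (Set.indicator_nonneg (fun _ _ => zero_le_one) x))
        (by
          rw [hgA]
          simp only [integral_const_mul]
          rw [integral_indicator_one hA, measureReal_def, ← hp, inv_mul_cancel₀ hp0.ne'])
      refine le_trans (le_of_eq ?_) h
      refine integral_congr_ae (ae_of_all _ fun x => ?_)
      congr 2
      rw [hgA]
      simp only [integral_const_mul]
      rw [integral_indicator_one hA, measureReal_def]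
    -- the duality identity and bound
    set w : χ → ℝ := fun x => (l ^ t)⁻¹ * k x - p * φ x with hw
    have hwint : Integrable w π := (hkint.const_mul _).sub (hφint.const_mul p)
    have hprodint : Integrable (fun x => (g x - a) * w x) π := by
      refine Integrable.mono' (hwint.abs.const_mul (Cb + |a|))
        (((hgm.sub measurable_const).aestronglyMeasurable).mul hwint.aestronglyMeasurable) ?_
      filter_upwards [hgB] with x hx
      rw [Real.norm_eq_abs, abs_mul]
      refine mul_le_mul_of_nonneg_right ?_ (abs_nonneg _)
      calc |g x - a| ≤ |g x| + |a| := abs_sub _ _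
        _ ≤ Cb + |a| := by rw [Real.norm_eq_abs] at hx; linarith
    have hiden : ∫ x, (g x - a) * w x ∂π
        = (l ^ t)⁻¹ * ∫ x, g x * k x ∂π - p * ∫ x, g x * φ x ∂π
          - a * (l ^ t)⁻¹ * ∫ x, k x ∂π + a * p * ∫ x, φ x ∂π := by
      have e : ∀ x, (g x - a) * w x
          = (l ^ t)⁻¹ * (g x * k x) - p * (g x * φ x)
            - a * (l ^ t)⁻¹ * k x + a * p * φ x := by
        intro x; rw [hw]; ring
      rw [integral_congr_ae (ae_of_all _ e)]
      have I1 : Integrable (fun x => (l ^ t)⁻¹ * (g x * k x)) π := hgkint.const_mul _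
      have I2 : Integrable (fun x => p * (g x * φ x)) π := hgφint.const_mul p
      have I3 : Integrable (fun x => a * (l ^ t)⁻¹ * k x) π := hkint.const_mul _
      have I4 : Integrable (fun x => a * p * φ x) π := hφint.const_mul _
      have I12 : Integrable (fun x => (l ^ t)⁻¹ * (g x * k x) - p * (g x * φ x)) π := I1.sub I2
      have I123 : Integrable (fun x =>
          (l ^ t)⁻¹ * (g x * k x) - p * (g x * φ x) - a * (l ^ t)⁻¹ * k x) π := I12.sub I3
      rw [integral_add I123 I4, integral_sub I12 I3, integral_sub I1 I2]
      simp only [integral_const_mul]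
    have hEeq : (l ^ t)⁻¹ * (ν A).toReal - (∫ x, φ x * g x ∂π) * p
        = ∫ x, (g x - a) * w x ∂π := by
      rw [hiden, hνAr, hkI, hφ1]
      have hφg : ∫ x, φ x * g x ∂π = ∫ x, g x * φ x ∂π :=
        integral_congr_ae (ae_of_all _ fun x => mul_comm _ _)
      rw [hφg]
      field_simp
      ring
    -- bound the integral
    have hbound : |∫ x, (g x - a) * w x ∂π| ≤ c * ∫ x, |w x| ∂π := by
      calc |∫ x, (g x - a) * w x ∂π| = ‖∫ x, (g x - a) * w x ∂π‖ := (Real.norm_eq_abs _).symm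
        _ ≤ ∫ x, ‖(g x - a) * w x‖ ∂π := norm_integral_le_integral_norm _
        _ = ∫ x, |(g x - a) * w x| ∂π := by simp only [Real.norm_eq_abs]
        _ ≤ ∫ x, c * |w x| ∂π := by
            refine integral_mono_ae hprodint.abs (hwint.abs.const_mul c) ?_
            filter_upwards [hga] with x hx
            rw [abs_mul]
            exact mul_le_mul_of_nonneg_right hx (abs_nonneg _)
        _ = c * ∫ x, |w x| ∂π := integral_const_mul _ _
    have hwabs : ∫ x, |w x| ∂π = p * ∫ x, |(l ^ t)⁻¹ * (p⁻¹ * k x) - φ x| ∂π := by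
      rw [← integral_const_mul]
      refine integral_congr_ae (ae_of_all _ fun x => ?_)
      simp only [hw]
      rw [show (l ^ t)⁻¹ * k x - p * φ x = p * ((l ^ t)⁻¹ * (p⁻¹ * k x) - φ x) by
        field_simp]
      rw [abs_mul, abs_of_pos hp0]
    calc |(l ^ t)⁻¹ * (ν A).toReal - (∫ x, φ x * g x ∂π) * p|
        = |∫ x, (g x - a) * w x ∂π| := by rw [hEeq]
      _ ≤ c * ∫ x, |w x| ∂π := hbound
      _ = c * (p * ∫ x, |(l ^ t)⁻¹ * (p⁻¹ * k x) - φ x| ∂π) := by rw [hwabs]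
      _ ≤ c * (p * ε t) := by
          refine mul_le_mul_of_nonneg_left ?_ hc0
          exact mul_le_mul_of_nonneg_left hTVA hp0.le
      _ = ε t * c * p := by ring
  -- now deduce the a.e. bound
  set f : χ → ℝ := fun y => (l ^ t)⁻¹ * (ν.rnDeriv π y).toReal - ∫ x, φ x * g x ∂π with hf
  have hfint : Integrable f π :=
    ((Measure.integrable_toReal_rnDeriv (μ := ν) (ν := π)).const_mul _).sub (integrable_const _)
  have hsetf : ∀ A : Set χ, MeasurableSet A →
      ∫ y in A, f y ∂π = (l ^ t)⁻¹ * (ν A).toReal - (∫ x, φ x * g x ∂π) * (π A).toReal := by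
    intro A hA
    rw [hf]
    rw [integral_sub ((Measure.integrable_toReal_rnDeriv (μ := ν)
      (ν := π)).integrableOn.const_mul _) (integrableOn_const (by
        exact (measure_lt_top π A).ne))]
    rw [integral_const_mul, Measure.setIntegral_toReal_rnDeriv hνac A, setIntegral_const,
      smul_eq_mul]
    simp only [measureReal_def]
    ring
  set C : ℝ := ε t * c with hC
  have hC0 : 0 ≤ C := mul_nonneg (hε t) hc0
  have h1 : 0 ≤ᵐ[π] fun y => C - f y := by
    refine ae_nonneg_of_forall_setIntegral_nonneg ((integrable_const C).sub hfint) ?_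
    intro s hs _
    rw [integral_sub (integrableOn_const (C := C) (measure_lt_top π s).ne)
      hfint.integrableOn, setIntegral_const, measureReal_def, smul_eq_mul, hsetf s hs]
    have := (abs_le.mp (key s hs)).2
    have hm : (ε t * c * (π s).toReal) = C * (π s).toReal := by rw [hC]
    nlinarith [this]
  have h2 : 0 ≤ᵐ[π] fun y => C + f y := by
    refine ae_nonneg_of_forall_setIntegral_nonneg ((integrable_const C).add hfint) ?_
    intro s hs _
    rw [integral_add (integrableOn_const (C := C) (measure_lt_top π s).ne)
      hfint.integrableOn, setIntegral_const, measureReal_def, smul_eq_mul, hsetf s hs]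
    have := (abs_le.mp (key s hs)).1
    nlinarith [this]
  filter_upwards [h1, h2] with y hy1 hy2
  simp only [Pi.zero_apply] at hy1 hy2
  have : |f y| ≤ C := abs_le.mpr ⟨by linarith, by linarith⟩
  simpa [hf, hC, hc, hνdef, hμdef] using this
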